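/- Let g ∈ U(2,1) have Iwasawa decomposition g = n·a(t₀)·m·k(α,β) with n ∈ N, t₀ ∈ ℝ, m ∈ M (the centralizer of A in K₀), and k(α,β) the image of [[α,β],[-β̄,ᾱ]] ∈ SU(2) under the embedding into K₀. Then for all z ∈ ℂ and τ,t ∈ ℝ: A(g·n(z,τ)·a(t)) = t₀ + t − log( | (α−1)/2 · (−e^t − |z|² + iτ) − β z̄ + (α+1)/2 |² ), where A(·) denotes the Iwasawa A-projection. -/

import Mathlib

open Matrix Complex

noncomputable section

def Jmat : Matrix (Fin 3) (Fin 3) ℂ := !![0,0,1;0,1,0;1,0,0]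

def nmat (z : ℂ) (τ : ℝ) : Matrix (Fin 3) (Fin 3) ℂ :=
  !![1, (Real.sqrt 2 : ℂ) * z, (τ : ℂ) * I - (normSq z : ℂ);
     0, 1, -(Real.sqrt 2 : ℂ) * starRingEnd ℂ z;
     0, 0, 1]

def amat (t : ℝ) : Matrix (Fin 3) (Fin 3) ℂ :=
  !![(Real.exp (t/2) : ℂ), 0, 0; 0, 1, 0; 0, 0, (Real.exp (-t/2) : ℂ)]

def kmat (α β : ℂ) : Matrix (Fin 3) (Fin 3) ℂ :=
  !![(α+1)/2, β/(Real.sqrt 2 : ℂ), (α-1)/2;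
     -(starRingEnd ℂ β)/(Real.sqrt 2 : ℂ), starRingEnd ℂ α, -(starRingEnd ℂ β)/(Real.sqrt 2 : ℂ);
     (α-1)/2, β/(Real.sqrt 2 : ℂ), (α+1)/2]

def U21 : Set (Matrix (Fin 3) (Fin 3) ℂ) := {g | gᴴ * Jmat * g = Jmat}

def Nset : Set (Matrix (Fin 3) (Fin 3) ℂ) := {x | ∃ z τ, x = nmat z τ}

def K0 : Set (Matrix (Fin 3) (Fin 3) ℂ) := {g | gᴴ * Jmat * g = Jmat ∧ gᴴ * g = 1}

/-- The centralizer M of A in K₀. -/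
def Mset : Set (Matrix (Fin 3) (Fin 3) ℂ) := {m | m ∈ K0 ∧ ∀ t : ℝ, m * amat t = amat t * m}

/- ---------- auxiliary lemmas ---------- -/

lemma nmat_U21 (z : ℂ) (τ : ℝ) : nmat z τ ∈ U21 := by
  simp only [U21, Set.mem_setOf_eq]
  ext i j
  fin_cases i <;> fin_cases j <;>
    simp [nmat, Jmat, Matrix.mul_apply, Fin.sum_univ_three, conjTranspose_apply,
      Matrix.vecHead, Matrix.vecTail, Complex.ext_iff, Complex.normSq_apply,
      Real.sq_sqrt] <;> ring_nf <;>
    simp [Real.sq_sqrt, Matrix.vecHead, Matrix.vecTail] <;> ring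

lemma amat_U21 (t : ℝ) : amat t ∈ U21 := by
  simp only [U21, Set.mem_setOf_eq]
  ext i j
  fin_cases i <;> fin_cases j <;>
    simp [amat, Jmat, Matrix.mul_apply, Fin.sum_univ_three, conjTranspose_apply,
      Matrix.vecHead, Matrix.vecTail, ← Complex.ofReal_exp, ← Complex.ofReal_mul,
      ← Real.exp_add] <;> ring_nf

lemma mul_U21 {a b : Matrix (Fin 3) (Fin 3) ℂ} (ha : a ∈ U21) (hb : b ∈ U21) :
    a * b ∈ U21 := by
  simp only [U21, Set.mem_setOf_eq] at *
  rw [conjTranspose_mul]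
  have : bᴴ * aᴴ * Jmat * (a * b) = bᴴ * (aᴴ * Jmat * a) * b := by
    simp only [Matrix.mul_assoc]
  rw [this, ha, hb]

/-- squared norm of the bottom row -/
def F (x : Matrix (Fin 3) (Fin 3) ℂ) : ℝ := normSq (x 2 0) + normSq (x 2 1) + normSq (x 2 2)

lemma mul_apply_row2 (A B : Matrix (Fin 3) (Fin 3) ℂ) (j : Fin 3) :
    (A * B) 2 j = A 2 0 * B 0 j + A 2 1 * B 1 j + A 2 2 * B 2 j := by
  rw [Matrix.mul_apply, Fin.sum_univ_three]

lemma F_mul_left {A : Matrix (Fin 3) (Fin 3) ℂ} (h0 : A 2 0 = 0) (h1 : A 2 1 = 0)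
    (B : Matrix (Fin 3) (Fin 3) ℂ) : F (A * B) = normSq (A 2 2) * F B := by
  simp [F, mul_apply_row2, h0, h1, normSq_mul]; ring

lemma F_K0 {k : Matrix (Fin 3) (Fin 3) ℂ} (hk : k ∈ K0) : F k = 1 := by
  have h : k * kᴴ = 1 := by
    rw [mul_eq_one_comm]; exact hk.2
  have h22 : (k * kᴴ) 2 2 = 1 := by rw [h]; simp
  rw [mul_apply_row2] at h22
  simp only [conjTranspose_apply] at h22
  simpa [F, Complex.mul_conj, ← Complex.ofReal_add] using h22

lemma Mset_row {m : Matrix (Fin 3) (Fin 3) ℂ} (hm : m ∈ Mset) :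
    m 2 0 = 0 ∧ m 2 1 = 0 ∧ normSq (m 2 2) = 1 := by
  have hc := hm.2 2
  have e20 := congrFun (congrFun hc 2) 0
  have e21 := congrFun (congrFun hc 2) 1
  rw [mul_apply_row2, mul_apply_row2] at e20 e21
  simp [amat, Matrix.vecHead, Matrix.vecTail] at e20 e21
  have hexp : (cexp 1 : ℂ) ≠ cexp (-1) := by
    intro h
    have := congrArg (‖·‖) h
    rw [Complex.norm_exp, Complex.norm_exp] at this
    simp at this
    norm_num at this
  have hexp1 : (cexp (-1) : ℂ) ≠ 1 := by
    intro h
    have := congrArg (‖·‖) h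
    rw [Complex.norm_exp] at this
    simp [Real.exp_eq_one_iff] at this
  have h20 : m 2 0 = 0 := by
    by_contra h
    have : m 2 0 * (cexp 1 - cexp (-1)) = 0 := by linear_combination e20
    rcases mul_eq_zero.1 this with e|e
    · exact h e
    · exact hexp (by linear_combination e)
  have h21 : m 2 1 = 0 := by
    by_contra h
    apply hexp1
    have : m 2 1 * (1 - cexp (-1)) = 0 := by linear_combination e21
    rcases mul_eq_zero.1 this with e|e
    · exact absurd e h
    · linear_combination -e
  refine ⟨h20, h21, ?_⟩
  have h : m * mᴴ = 1 := by rw [mul_eq_one_comm]; exact hm.1.2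
  have h22 : (m * mᴴ) 2 2 = 1 := by rw [h]; simp
  rw [mul_apply_row2] at h22
  simp only [conjTranspose_apply, h20, h21] at h22
  have : (normSq (m 2 2) : ℂ) = 1 := by
    rw [← Complex.mul_conj]; simpa using h22
  exact_mod_cast this

set_option maxHeartbeats 1000000 in
lemma key_id (α β z : ℂ) (τ E : ℝ) (hαβ : normSq α + normSq β = 1) :
    E^2 * normSq ((α-1)/2) + E * (normSq ((2:ℂ)*z*((α-1)/2)+β) / 2)
      + normSq ((α-1)/2*((τ:ℂ)*I - (normSq z:ℂ)) - β * (starRingEnd ℂ) z + (α+1)/2)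
    = normSq ((α-1)/2*(-(E:ℂ) - (normSq z:ℂ) + (τ:ℂ)*I) - β * (starRingEnd ℂ) z + (α+1)/2) := by
  simp only [Complex.normSq_apply, Complex.add_re, Complex.add_im, Complex.sub_re,
    Complex.sub_im, Complex.mul_re, Complex.mul_im, Complex.I_re, Complex.I_im,
    Complex.ofReal_re, Complex.ofReal_im, Complex.one_re, Complex.one_im,
    Complex.conj_re, Complex.conj_im, Complex.neg_re, Complex.neg_im,
    Complex.re_ofNat, Complex.im_ofNat, Complex.div_ofNat_re, Complex.div_ofNat_im]
  simp only [Complex.normSq_apply] at hαβ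
  linear_combination (E/2) * hαβ

lemma normSq_sqrt2 : normSq ((Real.sqrt 2 : ℝ) : ℂ) = 2 := by
  rw [Complex.normSq_ofReal]; exact Real.mul_self_sqrt (by norm_num)

lemma F_kna (α β z : ℂ) (τ t : ℝ) (hαβ : normSq α + normSq β = 1) :
    F (kmat α β * nmat z τ * amat t) = Real.exp (-t) *
      normSq ((α-1)/2 * (-(Real.exp t:ℂ) - (normSq z:ℂ) + (τ:ℂ)*I)
        - β*(starRingEnd ℂ) z + (α+1)/2) := by
  have E0 : (kmat α β * nmat z τ * amat t) 2 0 = (α-1)/2 * ((Real.exp (t/2) : ℝ) : ℂ) := by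
    simp [mul_apply_row2, kmat, nmat, amat, Matrix.vecHead, Matrix.vecTail]
  have h2c : ((Real.sqrt 2 : ℝ) : ℂ)^2 = 2 := by
    norm_cast
    exact Real.sq_sqrt (by norm_num)
  have E1 : (kmat α β * nmat z τ * amat t) 2 1
      = ((2:ℂ)*z*((α-1)/2) + β) / (Real.sqrt 2 : ℂ) := by
    simp [mul_apply_row2, kmat, nmat, amat, Matrix.vecHead, Matrix.vecTail]
    field_simp
    ring_nf
    rw [h2c]
    ring
  have E2 : (kmat α β * nmat z τ * amat t) 2 2
      = ((α-1)/2*((τ:ℂ)*I - (normSq z:ℂ)) - β * (starRingEnd ℂ) z + (α+1)/2)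
        * ((Real.exp (-t/2) : ℝ) : ℂ) := by
    simp [mul_apply_row2, kmat, nmat, amat, Matrix.vecHead, Matrix.vecTail]
    field_simp
    ring_nf
    try rw [h2c]
    try ring
  rw [F, E0, E1, E2]
  have hk := key_id α β z τ (Real.exp t) hαβ
  have h4 : Complex.normSq 2 = 4 := by norm_num [Complex.normSq_apply]
  simp only [normSq_mul, normSq_div, Complex.normSq_ofReal, normSq_sqrt2, h4] at hk ⊢
  have ha : t/2 + t/2 = t := by ring
  have hb : -t/2 + -t/2 = -t := by ring
  rw [← Real.exp_add, ← Real.exp_add, ha, hb]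
  have hE : Real.exp (-t) * Real.exp t = 1 := by rw [← Real.exp_add]; simp
  have hr : (Real.sqrt 2)⁻¹^2 = 1/2 := by
    rw [← Real.sqrt_inv]
    rw [Real.sq_sqrt (by norm_num)]
    norm_num
  linear_combination Real.exp (-t) * hk
    - (normSq (α-1)/4 * Real.exp t + normSq ((2:ℂ)*z*((α-1)/2)+β)/2) * hE
    + normSq ((2:ℂ)*z*((α-1)/2)+β) * hr

lemma amat_20 (s : ℝ) : amat s 2 0 = 0 := rfl
lemma amat_21 (s : ℝ) : amat s 2 1 = 0 := rfl
lemma amat_22 (s : ℝ) : amat s 2 2 = ((Real.exp (-s/2) : ℝ) : ℂ) := rfl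

lemma na_row2 (z' : ℂ) (τ' s : ℝ) (j : Fin 3) :
    (nmat z' τ' * amat s) 2 j = amat s 2 j := by
  rw [mul_apply_row2]
  simp [nmat, Matrix.vecHead, Matrix.vecTail]

/-- On U21, the A-projection determines the bottom-row norm. -/
lemma F_eq_exp (AA : Matrix (Fin 3) (Fin 3) ℂ → ℝ)
    (κ : Matrix (Fin 3) (Fin 3) ℂ → Matrix (Fin 3) (Fin 3) ℂ)
    (hdec : ∀ g ∈ U21, κ g ∈ K0 ∧ ∃ n ∈ Nset, g = n * amat (AA g) * κ g)
    {x : Matrix (Fin 3) (Fin 3) ℂ} (hx : x ∈ U21) :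
    F x = Real.exp (-(AA x)) := by
  obtain ⟨hκ, n', hn', hxd⟩ := hdec x hx
  obtain ⟨z', τ', rfl⟩ := hn'
  conv_lhs => rw [hxd]
  rw [F_mul_left, F_K0 hκ, na_row2, amat_22, Complex.normSq_ofReal, ← Real.exp_add,
    show -AA x/2 + -AA x/2 = -AA x by ring, mul_one]
  · rw [na_row2, amat_20]
  · rw [na_row2, amat_21]

theorem explicit_formula_for_A_projection
    (AA : Matrix (Fin 3) (Fin 3) ℂ → ℝ)
    (κ : Matrix (Fin 3) (Fin 3) ℂ → Matrix (Fin 3) (Fin 3) ℂ)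
    (hdec : ∀ g ∈ U21, κ g ∈ K0 ∧ ∃ n ∈ Nset, g = n * amat (AA g) * κ g)
    (huniq : ∀ n ∈ Nset, ∀ n' ∈ Nset, ∀ (t t' : ℝ), ∀ k ∈ K0, ∀ k' ∈ K0,
      n * amat t * k = n' * amat t' * k' → t = t' ∧ k = k')
    (g : Matrix (Fin 3) (Fin 3) ℂ) (n₀ m : Matrix (Fin 3) (Fin 3) ℂ) (t₀ : ℝ) (α β : ℂ)
    (hg : g ∈ U21) (hn₀ : n₀ ∈ Nset) (hm : m ∈ Mset) (hαβ : normSq α + normSq β = 1)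
    (hdecg : g = n₀ * amat t₀ * m * kmat α β) :
    ∀ (z : ℂ) (τ t : ℝ),
      AA (g * nmat z τ * amat t) = t₀ + t -
        Real.log ((‖(α - 1)/2 * (-(Real.exp t : ℂ) - (normSq z : ℂ) + (τ : ℂ) * I)
          - β * starRingEnd ℂ z + (α + 1)/2‖)^2) := by
  intro z τ t
  set w : ℂ := (α - 1)/2 * (-(Real.exp t : ℂ) - (normSq z : ℂ) + (τ : ℂ) * I)
    - β * starRingEnd ℂ z + (α + 1)/2 with hw
  set x := g * nmat z τ * amat t with hx
  have hxU : x ∈ U21 := mul_U21 (mul_U21 hg (nmat_U21 z τ)) (amat_U21 t)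
  -- first evaluation of F x
  have h1 : F x = Real.exp (-(AA x)) := F_eq_exp AA κ hdec hxU
  -- second evaluation of F x
  obtain ⟨z₀, τ₀, hn0⟩ := hn₀
  obtain ⟨hm0, hm1, hm2⟩ := Mset_row hm
  have hsplit : x = ((n₀ * amat t₀) * m) * (kmat α β * nmat z τ * amat t) := by
    rw [hx, hdecg]
    simp only [Matrix.mul_assoc]
  have hQ0 : ((n₀ * amat t₀) * m) 2 0 = 0 := by
    rw [mul_apply_row2, hn0, na_row2, na_row2, na_row2, amat_20, amat_21, amat_22, hm0]
    ring
  have hQ1 : ((n₀ * amat t₀) * m) 2 1 = 0 := by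
    rw [mul_apply_row2, hn0, na_row2, na_row2, na_row2, amat_20, amat_21, amat_22, hm1]
    ring
  have hQ2 : normSq (((n₀ * amat t₀) * m) 2 2) = Real.exp (-t₀) := by
    rw [mul_apply_row2, hn0, na_row2, na_row2, na_row2, amat_20, amat_21, amat_22]
    rw [show (0 : ℂ) * m 0 2 + 0 * m 1 2 + ((Real.exp (-t₀/2) : ℝ) : ℂ) * m 2 2
        = ((Real.exp (-t₀/2) : ℝ) : ℂ) * m 2 2 by ring]
    rw [normSq_mul, Complex.normSq_ofReal, hm2, mul_one, ← Real.exp_add,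
      show -t₀/2 + -t₀/2 = -t₀ by ring]
  have h2 : F x = Real.exp (-t₀) * (Real.exp (-t) * normSq w) := by
    rw [hsplit, F_mul_left hQ0 hQ1, hQ2, F_kna α β z τ t hαβ]
  -- conclude
  have hkey : Real.exp (-(AA x)) = Real.exp (-t₀) * (Real.exp (-t) * normSq w) := by
    rw [← h1, h2]
  have hwpos : 0 < normSq w := by
    by_contra h
    push_neg at h
    have : Real.exp (-t₀) * (Real.exp (-t) * normSq w) ≤ 0 := by
      have := mul_nonpos_of_nonneg_of_nonpos (le_of_lt (Real.exp_pos (-t))) h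
      exact mul_nonpos_of_nonneg_of_nonpos (le_of_lt (Real.exp_pos (-t₀))) this
    linarith [Real.exp_pos (-(AA x)), hkey ▸ this]
  have hlog := congrArg Real.log hkey
  rw [Real.log_exp, Real.log_mul (by positivity) (by positivity),
    Real.log_mul (by positivity) (ne_of_gt hwpos), Real.log_exp, Real.log_exp] at hlog
  have habs : ‖w‖^2 = normSq w := Complex.sq_norm w
  rw [habs]
  linarith [hlog]

end
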